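/- Reed–Solomon erasure-only decoding: let the generator be g(x) = (x-1)(x-β)···(x-β^{f-1}) over GF(q), and suppose e ≤ f erasures occur at known locators X₀, ..., X_{e-1} (distinct nonzero elements). Then the erasure values Y₀, ..., Y_{e-1} are uniquely determined by the syndromes Ŝᵢ = y(βⁱ), i = 0, ..., f-1, via the Forney formula Yᵢ = Ω̂(Xᵢ⁻¹)/Λ̂_odd(Xᵢ⁻¹), where Λ̂(x) = ∏ⱼ(1 - Xⱼx) and Ω̂(x) = Λ̂(x)Ŝ(x) mod x^f. -/

import Mathlib

open Polynomial Finset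

private lemma castCharTwo {F : Type*} [Field F] [CharP F 2] (n : ℕ) :
    ((n : F)) = if Odd n then 1 else 0 := by
  have h2 : (2 : F) = 0 := by exact_mod_cast CharP.cast_eq_zero F 2
  conv_lhs => rw [← Nat.div_add_mod n 2]
  push_cast
  rw [h2, zero_mul, zero_add]
  rcases Nat.even_or_odd n with h | h
  · have hm : n % 2 = 0 := Nat.even_iff.mp h
    simp [hm, Nat.odd_iff]
  · have hm : n % 2 = 1 := Nat.odd_iff.mp h
    simp [hm, Nat.odd_iff]

private lemma derivFinprod {R : Type*} [CommRing R] {ι : Type*} [DecidableEq ι]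
    (s : Finset ι) (g : ι → Polynomial R) :
    Polynomial.derivative (∏ i ∈ s, g i) =
      ∑ i ∈ s, Polynomial.derivative (g i) * ∏ j ∈ s.erase i, g j := by
  induction s using Finset.induction_on with
  | empty => simp
  | @insert a s ha ih =>
    rw [Finset.prod_insert ha, Polynomial.derivative_mul, ih, Finset.sum_insert ha,
      Finset.erase_insert ha, Finset.mul_sum]
    congr 1
    refine Finset.sum_congr rfl fun j hj => ?_
    rw [Finset.erase_insert_of_ne (by rintro rfl; exact ha hj),
      Finset.prod_insert (fun h => ha (Finset.mem_of_mem_erase h))]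
    ring

private lemma oddPartEq {F : Type*} [Field F] [CharP F 2] (p : Polynomial F) :
    (∑ k ∈ Finset.range (p.natDegree + 1),
      if Odd k then Polynomial.monomial k (p.coeff k) else 0)
      = Polynomial.X * Polynomial.derivative p := by
  ext n
  rw [Polynomial.finset_sum_coeff]
  have hL : ∀ k, (if Odd k then Polynomial.monomial k (p.coeff k) else 0).coeff n
      = if k = n then (if Odd n then p.coeff n else 0) else 0 := by
    intro k
    by_cases hk : k = n
    · subst hk; by_cases h : Odd k <;> simp [h, Polynomial.coeff_monomial]
    · by_cases h : Odd k <;> simp [h, Polynomial.coeff_monomial, hk]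
  simp_rw [hL]
  rw [Finset.sum_ite_eq' (Finset.range (p.natDegree + 1)) n]
  cases n with
  | zero => simp
  | succ m =>
    rw [Polynomial.coeff_X_mul, Polynomial.coeff_derivative]
    have hcast : ((m : F) + 1) = if Odd (m + 1) then 1 else 0 := by
      have := castCharTwo (F := F) (m + 1); push_cast at this; exact this
    rw [hcast]
    by_cases hmem : m + 1 ∈ Finset.range (p.natDegree + 1)
    · rw [if_pos hmem]
      by_cases hodd : Odd (m + 1) <;> simp [hodd]
    · rw [if_neg hmem]
      have h0 : p.coeff (m + 1) = 0 :=
        Polynomial.coeff_eq_zero_of_natDegree_lt (by simp at hmem; omega)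
      simp [h0]



open Polynomial Finset in
/-- Reed–Solomon erasure-only decoding via the Forney formula: with generator roots
`1, β, …, β^{f-1}`, `e ≤ f` erasures at known distinct nonzero locators `Xᵢ` and
values `Yᵢ`, syndromes `Ŝᵢ = Σⱼ Yⱼ Xⱼⁱ`, erasure locator polynomial
`Λ̂(x) = ∏ⱼ (1 - Xⱼ x)`, and erasure evaluator `Ω̂(x) = Λ̂(x) Ŝ(x) mod x^f`, each
erasure value is recovered as `Yᵢ = Ω̂(Xᵢ⁻¹) / Λ̂_odd(Xᵢ⁻¹)`, where `Λ̂_odd` is the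
sum of odd-degree terms of `Λ̂` (binary-extension field, characteristic 2). -/
theorem stmt13 (F : Type*) [Field F] [CharP F 2] (f e : ℕ) (hef : e ≤ f)
    (X : Fin e → F) (hXinj : Function.Injective X) (hX0 : ∀ j, X j ≠ 0)
    (Y : Fin e → F)
    (Shat : Polynomial F)
    (hShat : Shat = ∑ i ∈ Finset.range f, C (∑ j, Y j * X j ^ i) * Polynomial.X ^ i)
    (Λhat : Polynomial F) (hΛ : Λhat = ∏ j, (1 - C (X j) * Polynomial.X))
    (Ωhat : Polynomial F) (hΩ : Ωhat = (Λhat * Shat) % Polynomial.X ^ f)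
    (Λodd : Polynomial F)
    (hΛodd : Λodd = ∑ k ∈ Finset.range (Λhat.natDegree + 1),
      if Odd k then Polynomial.monomial k (Λhat.coeff k) else 0) :
    ∀ i, Y i = Ωhat.eval (X i)⁻¹ / Λodd.eval (X i)⁻¹ := by
  intro i
  set x : F := (X i)⁻¹ with hxdef
  set P : Fin e → Polynomial F :=
    fun j => ∏ k ∈ Finset.univ.erase j, (1 - C (X k) * Polynomial.X) with hP
  have hΛfac : ∀ j : Fin e, Λhat = (1 - C (X j) * Polynomial.X) * P j := by
    intro j
    rw [hΛ]
    exact (Finset.mul_prod_erase Finset.univ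
      (fun k => 1 - C (X k) * Polynomial.X) (Finset.mem_univ j)).symm
  set Q : Polynomial F := ∑ j, C (Y j) * P j with hQ
  -- (1) Ωhat = Q
  have hS' : Shat = ∑ j, C (Y j) * ∑ k ∈ Finset.range f, (C (X j) * Polynomial.X) ^ k := by
    calc Shat = ∑ k ∈ Finset.range f, ∑ j, C (Y j) * (C (X j) * Polynomial.X) ^ k := by
          rw [hShat]
          refine Finset.sum_congr rfl fun k _ => ?_
          rw [map_sum, Finset.sum_mul]
          refine Finset.sum_congr rfl fun j _ => ?_
          rw [map_mul, map_pow, mul_pow]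
          ring
      _ = _ := by rw [Finset.sum_comm]; simp [Finset.mul_sum]
  have hprod : Λhat * Shat = Q + Polynomial.X ^ f *
      (-∑ j, C (Y j) * P j * C (X j ^ f)) := by
    rw [hS', Finset.mul_sum]
    have hterm : ∀ j : Fin e,
        Λhat * (C (Y j) * ∑ k ∈ Finset.range f, (C (X j) * Polynomial.X) ^ k)
          = C (Y j) * P j - Polynomial.X ^ f * (C (Y j) * P j * C (X j ^ f)) := by
      intro j
      have hg : (1 - C (X j) * Polynomial.X) *
          (∑ k ∈ Finset.range f, (C (X j) * Polynomial.X) ^ k)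
          = 1 - (C (X j) * Polynomial.X) ^ f := by
        have := geom_sum_mul (C (X j) * Polynomial.X) f
        linear_combination -this
      rw [hΛfac j]
      calc (1 - C (X j) * Polynomial.X) * P j *
            (C (Y j) * ∑ k ∈ Finset.range f, (C (X j) * Polynomial.X) ^ k)
          = C (Y j) * P j * ((1 - C (X j) * Polynomial.X) *
            ∑ k ∈ Finset.range f, (C (X j) * Polynomial.X) ^ k) := by ring
        _ = C (Y j) * P j * (1 - (C (X j) * Polynomial.X) ^ f) := by rw [hg]
        _ = C (Y j) * P j - Polynomial.X ^ f * (C (Y j) * P j * C (X j ^ f)) := by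
            rw [mul_pow, map_pow]; ring
    simp_rw [hterm]
    rw [Finset.sum_sub_distrib, ← Finset.mul_sum]
    ring
  have hQdeg : Q.degree < (Polynomial.X ^ f : Polynomial F).degree := by
    rw [Polynomial.degree_X_pow]
    refine lt_of_le_of_lt (Polynomial.degree_sum_le _ _) ?_
    rw [Finset.sup_lt_iff (by exact_mod_cast WithBot.bot_lt_coe f)]
    intro j _
    have hnat : (P j).natDegree < f := by
      have h1 : (P j).natDegree ≤
          ∑ k ∈ Finset.univ.erase j, (1 - C (X k) * Polynomial.X).natDegree :=
        Polynomial.natDegree_prod_le _ _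
      have h2 : ∑ k ∈ Finset.univ.erase j, (1 - C (X k) * Polynomial.X).natDegree
          ≤ ∑ _k ∈ Finset.univ.erase j, 1 := by
        refine Finset.sum_le_sum fun k _ => ?_
        refine le_trans (Polynomial.natDegree_sub_le _ _) ?_
        simp only [Polynomial.natDegree_one, max_le_iff]
        exact ⟨Nat.zero_le _, le_trans (Polynomial.natDegree_mul_le) (by simp)⟩
      have h3 : ∑ _k ∈ Finset.univ.erase j, 1 = e - 1 := by
        rw [Finset.sum_const, smul_eq_mul, mul_one,
          Finset.card_erase_of_mem (Finset.mem_univ j), Finset.card_univ, Fintype.card_fin]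
      have he : 1 ≤ e := Nat.one_le_iff_ne_zero.mpr (by rintro rfl; exact j.elim0)
      omega
    calc (C (Y j) * P j).degree ≤ (C (Y j)).degree + (P j).degree :=
          Polynomial.degree_mul_le _ _
      _ ≤ 0 + (P j).degree := by gcongr; exact Polynomial.degree_C_le
      _ = (P j).degree := by rw [zero_add]
      _ ≤ ((P j).natDegree : WithBot ℕ) := Polynomial.degree_le_natDegree
      _ < (f : WithBot ℕ) := by exact_mod_cast hnat
  have hΩQ : Ωhat = Q := by
    rw [hΩ, hprod, ← Polynomial.modByMonic_eq_mod _ (Polynomial.monic_X_pow f),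
      Polynomial.add_modByMonic,
      (Polynomial.modByMonic_eq_zero_iff_dvd (Polynomial.monic_X_pow f)).mpr ⟨_, rfl⟩,
      add_zero]
    exact (Polynomial.modByMonic_eq_self_iff (Polynomial.monic_X_pow f)).mpr hQdeg
  -- (2) evaluations
  have hx1 : X i * x = 1 := mul_inv_cancel₀ (hX0 i)
  have hPzero : ∀ j, j ≠ i → (P j).eval x = 0 := by
    intro j hj
    rw [hP]
    simp only [Polynomial.eval_prod]
    refine Finset.prod_eq_zero (Finset.mem_erase.mpr ⟨Ne.symm hj, Finset.mem_univ i⟩) ?_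
    simp [hx1]
  set c : F := (P i).eval x with hc
  have hcne : c ≠ 0 := by
    rw [hc, hP]
    simp only [Polynomial.eval_prod]
    refine Finset.prod_ne_zero_iff.mpr fun k hk => ?_
    simp only [Polynomial.eval_sub, Polynomial.eval_one, Polynomial.eval_mul,
      Polynomial.eval_C, Polynomial.eval_X]
    intro h0
    have : X k * x = 1 := by linear_combination -h0
    have hki : X k = X i := by
      field_simp [hxdef, hX0 i] at this
      calc X k = X k * x * X i := by rw [mul_assoc, mul_comm x (X i), hx1, mul_one]
        _ = X i := by rw [this, one_mul]
    exact (Finset.mem_erase.mp hk).1 (hXinj hki)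
  have hΩeval : Ωhat.eval x = Y i * c := by
    rw [hΩQ, hQ, Polynomial.eval_finset_sum]
    rw [Finset.sum_eq_single i]
    · simp [hc]
    · intro j _ hj
      simp [hPzero j hj]
    · intro h; exact absurd (Finset.mem_univ i) h
  have hderiv : Polynomial.derivative Λhat = ∑ j, -C (X j) * P j := by
    rw [hΛ, derivFinprod]
    refine Finset.sum_congr rfl fun j _ => ?_
    congr 1
    simp
  have hΛoddeval : Λodd.eval x = c := by
    rw [hΛodd, oddPartEq, hderiv]
    rw [Polynomial.eval_mul, Polynomial.eval_X, Polynomial.eval_finset_sum]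
    rw [Finset.sum_eq_single i]
    · simp only [Polynomial.eval_mul, Polynomial.eval_neg, Polynomial.eval_C, ← hc]
      have : x * (-X i * c) = -(X i * x) * c := by ring
      rw [this, hx1, CharTwo.neg_eq, one_mul]
    · intro j _ hj
      simp [hPzero j hj]
    · intro h; exact absurd (Finset.mem_univ i) h
  rw [hΩeval, hΛoddeval, mul_div_cancel_right₀ _ hcne]
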